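/- arXiv:1706.03147 — 7 statements merged into one kernel-verified Lean document; each statement's English description precedes it below -/
import Mathlib

section
/- Let A be nonsingular and Â = A - H E Hᵀ with H an n×m submatrix of the identity and E m×m. If Â is nonsingular, then S₂ = E Hᵀ A⁻¹ H - I_m is nonsingular. -/
open scoped Matrix

/-- If A and Â = A - H E Hᵀ are both nonsingular (H a submatrix
of the identity), then S₂ = E Hᵀ A⁻¹ H - I is nonsingular. -/
theorem stmt_10 {n m : ℕ} (A : Matrix (Fin n) (Fin n) ℝ) (hA : IsUnit A.det)
    (H : Matrix (Fin n) (Fin m) ℝ) (hH : Hᵀ * H = 1)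
    (E : Matrix (Fin m) (Fin m) ℝ)
    (hAhat : IsUnit (A - H * E * Hᵀ).det) :
    IsUnit (E * Hᵀ * A⁻¹ * H - 1).det := by
  have hfac : A - H * E * Hᵀ = A * (1 - A⁻¹ * (H * E * Hᵀ)) := by
    rw [Matrix.mul_sub, Matrix.mul_one, ← Matrix.mul_assoc,
      Matrix.mul_nonsing_inv A hA, Matrix.one_mul]
  rw [hfac, Matrix.det_mul] at hAhat
  have h2 : IsUnit (1 - A⁻¹ * (H * E * Hᵀ)).det := isUnit_of_mul_isUnit_right hAhat
  have h3 : (1 - A⁻¹ * (H * E * Hᵀ)).det = (1 - E * Hᵀ * A⁻¹ * H).det := by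
    have : A⁻¹ * (H * E * Hᵀ) = (A⁻¹ * (H * E)) * Hᵀ := by
      simp only [Matrix.mul_assoc]
    rw [this, Matrix.det_one_sub_mul_comm]
    have : Hᵀ * (A⁻¹ * (H * E)) = (Hᵀ * A⁻¹ * H) * E := by
      simp only [Matrix.mul_assoc]
    rw [this, ← Matrix.det_one_sub_mul_comm]
    congr 1
    simp only [Matrix.mul_assoc]
  rw [h3] at h2
  have h4 : E * Hᵀ * A⁻¹ * H - 1 = -(1 - E * Hᵀ * A⁻¹ * H) := by rw [neg_sub]
  rw [h4, Matrix.det_neg]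
  exact (isUnit_one.neg.pow _).mul h2
end

section
/- Suppose A is nonsingular, H an n×m submatrix of the identity, E m×m symmetric with Â = A - H E Hᵀ nonsingular, and b, b̂ ∈ ℝⁿ with b̂ - b ∈ range(H). If x̂₃ solves (E Hᵀ A⁻¹ H - I) x̂₃ = E Hᵀ A⁻¹ b - Hᵀ(b - b̂), then x̂ := A⁻¹ b - A⁻¹ H x̂₃ satisfies Â x̂ = b̂. -/
open scoped Matrix

/-- correctness of the AMPS direct method: with A nonsingular,
H a submatrix of the identity, E symmetric, Â = A - H E Hᵀ nonsingular and
b̂ - b in the range of H, if x̂₃ solves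
(E Hᵀ A⁻¹ H - I) x̂₃ = E Hᵀ A⁻¹ b - Hᵀ(b - b̂), then
x̂ = A⁻¹ b - A⁻¹ H x̂₃ satisfies Â x̂ = b̂. -/
theorem stmt_11 {n m : ℕ} (A : Matrix (Fin n) (Fin n) ℝ) (hA : IsUnit A.det)
    (idx : Fin m → Fin n) (hidx : Function.Injective idx)
    (H : Matrix (Fin n) (Fin m) ℝ)
    (hH : H = Matrix.of fun i k => if i = idx k then (1 : ℝ) else 0)
    (E : Matrix (Fin m) (Fin m) ℝ) (hEsym : E.IsSymm)
    (hAhat : IsUnit (A - H * E * Hᵀ).det)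
    (b bhat : Fin n → ℝ) (hb : ∃ y : Fin m → ℝ, bhat - b = H *ᵥ y)
    (x₃ : Fin m → ℝ)
    (hx₃ : (E * Hᵀ * A⁻¹ * H - 1) *ᵥ x₃ = (E * Hᵀ * A⁻¹) *ᵥ b - Hᵀ *ᵥ (b - bhat)) :
    (A - H * E * Hᵀ) *ᵥ (A⁻¹ *ᵥ b - A⁻¹ *ᵥ (H *ᵥ x₃)) = bhat := by
  obtain ⟨y, hy⟩ := hb
  have hHtH : Hᵀ * H = 1 := by
    subst hH
    ext k l
    simp only [Matrix.mul_apply, Matrix.transpose_apply, Matrix.of_apply, Matrix.one_apply]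
    rw [Finset.sum_eq_single (idx k)]
    · by_cases h : k = l <;> simp [h, hidx.eq_iff]
    · intro i _ hi; simp [hi]
    · simp
  have hrange : (H * Hᵀ) *ᵥ (b - bhat) = b - bhat := by
    have hbb : b - bhat = H *ᵥ (-y) := by
      rw [Matrix.mulVec_neg, ← hy]; abel
    rw [hbb, Matrix.mulVec_mulVec, Matrix.mul_assoc, hHtH, Matrix.mul_one]
  have hAinv : A * A⁻¹ = 1 := Matrix.mul_nonsing_inv A hA
  have h1 : A *ᵥ (A⁻¹ *ᵥ b) = b := by
    rw [Matrix.mulVec_mulVec, hAinv, Matrix.one_mulVec]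
  have h2 : A *ᵥ (A⁻¹ *ᵥ (H *ᵥ x₃)) = H *ᵥ x₃ := by
    rw [Matrix.mulVec_mulVec, hAinv, Matrix.one_mulVec]
  have key : (H * E * Hᵀ * A⁻¹ * H) *ᵥ x₃ - H *ᵥ x₃
      = (H * E * Hᵀ * A⁻¹) *ᵥ b - (H * Hᵀ) *ᵥ (b - bhat) := by
    have h := congrArg (fun v => H *ᵥ v) hx₃
    simpa [Matrix.mulVec_sub, Matrix.sub_mulVec, Matrix.mulVec_mulVec,
      Matrix.mul_assoc, Matrix.one_mulVec, Matrix.mul_one] using h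
  rw [hrange] at key
  rw [Matrix.sub_mulVec, Matrix.mulVec_sub, Matrix.mulVec_sub, h1, h2,
    Matrix.mulVec_mulVec b (H * E * Hᵀ) A⁻¹,
    Matrix.mulVec_mulVec (H *ᵥ x₃) (H * E * Hᵀ) A⁻¹,
    Matrix.mulVec_mulVec x₃ (H * E * Hᵀ * A⁻¹) H]
  have := key
  rw [eq_sub_iff_add_eq] at this
  rw [← this]
  abel
end

section
/- Let A be nonsingular symmetric, H an n×m submatrix of the identity, E m×m symmetric. The symmetric 2m×2m matrix S₁ = [[E, I],[I, Hᵀ A⁻¹ H]] is nonsingular if and only if Â = A - H E Hᵀ is nonsingular. -/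
open scoped Matrix

/-- With A symmetric nonsingular, H a submatrix of the identity
with distinct columns and E symmetric, S₁ = [[E, I],[I, Hᵀ A⁻¹ H]] is
nonsingular iff Â = A - H E Hᵀ is nonsingular. -/
theorem stmt_12 {n m : ℕ} (A : Matrix (Fin n) (Fin n) ℝ)
    (hAsym : A.IsSymm) (hA : IsUnit A.det)
    (idx : Fin m → Fin n) (hidx : Function.Injective idx)
    (H : Matrix (Fin n) (Fin m) ℝ)
    (hH : H = Matrix.of fun i k => if i = idx k then (1 : ℝ) else 0)
    (E : Matrix (Fin m) (Fin m) ℝ) (hEsym : E.IsSymm) :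
    IsUnit (Matrix.fromBlocks E 1 1 (Hᵀ * A⁻¹ * H)).det ↔
      IsUnit (A - H * E * Hᵀ).det := by
  set D : Matrix (Fin m) (Fin m) ℝ := Hᵀ * A⁻¹ * H with hD
  -- block swap matrix
  set J : Matrix (Fin m ⊕ Fin m) (Fin m ⊕ Fin m) ℝ := Matrix.fromBlocks 0 1 1 0 with hJ
  have hJJ : J * J = 1 := by
    simp [hJ, Matrix.fromBlocks_multiply, Matrix.fromBlocks_one]
  have hJdet : IsUnit J.det := IsUnit.of_mul_eq_one _ (by rw [← Matrix.det_mul, hJJ, Matrix.det_one])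
  have hswap : (Matrix.fromBlocks E 1 1 D) * J = Matrix.fromBlocks 1 E D 1 := by
    simp [hJ, Matrix.fromBlocks_multiply]
  have h1 : IsUnit (Matrix.fromBlocks E 1 1 D).det ↔ IsUnit ((1 : Matrix (Fin m) (Fin m) ℝ) - D * E).det := by
    have := congrArg Matrix.det hswap
    rw [Matrix.det_mul, Matrix.det_fromBlocks_one₁₁] at this
    rw [← this, IsUnit.mul_iff]
    exact (and_iff_left hJdet).symm
  have hAinv : A * A⁻¹ = 1 := Matrix.mul_nonsing_inv A hA
  have h2 : A - H * E * Hᵀ = A * (1 - A⁻¹ * (H * E * Hᵀ)) := by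
    rw [Matrix.mul_sub, mul_one, ← Matrix.mul_assoc, hAinv, Matrix.one_mul]
  have h3 : ((1 : Matrix (Fin n) (Fin n) ℝ) - A⁻¹ * (H * E * Hᵀ)).det
      = ((1 : Matrix (Fin m) (Fin m) ℝ) - D * E).det := by
    have := Matrix.det_one_sub_mul_comm (A⁻¹ * H) (E * Hᵀ)
    have h4 : A⁻¹ * H * (E * Hᵀ) = A⁻¹ * (H * E * Hᵀ) := by
      simp [Matrix.mul_assoc]
    have h5 : E * Hᵀ * (A⁻¹ * H) = E * D := by
      simp [hD, Matrix.mul_assoc]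
    rw [h4, h5] at this
    rw [this, Matrix.det_one_sub_mul_comm]
  rw [h1, h2, Matrix.det_mul, IsUnit.mul_iff, h3]
  exact (and_iff_right hA).symm
end

section
/- Block elimination of A in the augmented matrix: with L̂ = [[L, 0, 0],[HᵀL, I, 0],[HᵀL⁻ᵀD⁻¹, 0, I]] and D̂ = [[D, 0],[0, -S₁]], one has [[A, AH, H],[HᵀA, C, 0],[Hᵀ, 0, 0]] = L̂ D̂ L̂ᵀ, where A = L D Lᵀ, C = HᵀAH - E, and S₁ = [[E, I],[I, HᵀA⁻¹H]]. -/
open scoped Matrix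

/-- Block elimination of A in the augmented matrix: with
L̂ = [[L,0,0],[HᵀL,I,0],[HᵀL⁻ᵀD⁻¹,0,I]] and D̂ = [[D,0],[0,-S₁]] one has
[[A, AH, H],[HᵀA, C, 0],[Hᵀ, 0, 0]] = L̂ D̂ L̂ᵀ, where A = L D Lᵀ,
C = HᵀAH - E and S₁ = [[E, I],[I, HᵀA⁻¹H]]. -/
theorem stmt_13 {n m : ℕ} (A L D : Matrix (Fin n) (Fin n) ℝ)
    (hAsym : A.IsSymm) (hA : IsUnit A.det)
    (hL : IsUnit L.det) (hD : IsUnit D.det) (hDsym : D.IsSymm)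
    (hLDL : A = L * D * Lᵀ)
    (idx : Fin m → Fin n) (hidx : Function.Injective idx)
    (H : Matrix (Fin n) (Fin m) ℝ)
    (hH : H = Matrix.of fun i k => if i = idx k then (1 : ℝ) else 0)
    (E : Matrix (Fin m) (Fin m) ℝ) (hEsym : E.IsSymm)
    (C : Matrix (Fin m) (Fin m) ℝ) (hC : C = Hᵀ * A * H - E)
    (Lhat : Matrix (Fin n ⊕ (Fin m ⊕ Fin m)) (Fin n ⊕ (Fin m ⊕ Fin m)) ℝ)
    (hLhat : Lhat = Matrix.fromBlocks L 0
      (Matrix.fromRows (Hᵀ * L) (Hᵀ * (Lᵀ)⁻¹ * D⁻¹)) 1)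
    (S₁ : Matrix (Fin m ⊕ Fin m) (Fin m ⊕ Fin m) ℝ)
    (hS₁ : S₁ = Matrix.fromBlocks E 1 1 (Hᵀ * A⁻¹ * H))
    (Dhat : Matrix (Fin n ⊕ (Fin m ⊕ Fin m)) (Fin n ⊕ (Fin m ⊕ Fin m)) ℝ)
    (hDhat : Dhat = Matrix.fromBlocks D 0 0 (-S₁)) :
    Matrix.fromBlocks A (Matrix.fromCols (A * H) H)
        (Matrix.fromRows (Hᵀ * A) Hᵀ) (Matrix.fromBlocks C 0 0 0) =
      Lhat * Dhat * Lhatᵀ := by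
  have hLt : IsUnit (Lᵀ).det := by rwa [Matrix.det_transpose]
  have hAinv : A⁻¹ = (Lᵀ)⁻¹ * (D⁻¹ * L⁻¹) := by
    rw [hLDL, Matrix.mul_inv_rev, Matrix.mul_inv_rev]
  have hHH : Hᵀ * H = 1 := by
    subst hH
    ext k l
    simp only [Matrix.mul_apply, Matrix.transpose_apply, Matrix.of_apply,
      ite_mul, one_mul, zero_mul]
    rw [Finset.sum_ite_eq' Finset.univ (idx k)]
    simp [hidx.eq_iff, Matrix.one_apply, eq_comm]
  have hA1 : L * (D * Lᵀ) = A := by rw [hLDL, Matrix.mul_assoc]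
  have hA3 : L * (D * (Lᵀ * H)) = A * H := by
    rw [hLDL, Matrix.mul_assoc, Matrix.mul_assoc]
  have hA2 : Lᵀ⁻¹ * (D⁻¹ * (L⁻¹ * H)) = A⁻¹ * H := by
    rw [hAinv, Matrix.mul_assoc, Matrix.mul_assoc]
  rw [hLhat, hDhat, hS₁]
  simp only [Matrix.fromBlocks_transpose, Matrix.transpose_fromRows,
    Matrix.fromBlocks_multiply, Matrix.fromRows_mul, Matrix.mul_fromCols,
    Matrix.fromRows_mul_fromCols, Matrix.transpose_mul,
    Matrix.transpose_nonsing_inv, Matrix.transpose_transpose, hDsym.eq,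
    Matrix.mul_zero, Matrix.zero_mul, mul_zero, zero_mul,
    Matrix.transpose_zero, Matrix.transpose_one, add_zero, zero_add,
    Matrix.mul_one, Matrix.one_mul, one_mul, mul_one, neg_mul, Matrix.mul_neg,
    Matrix.mul_assoc, Matrix.mul_nonsing_inv_cancel_left _ _ hD,
    Matrix.mul_nonsing_inv_cancel_left _ _ hL,
    Matrix.nonsing_inv_mul_cancel_left _ _ hD,
    Matrix.nonsing_inv_mul_cancel_left _ _ hLt,
    Matrix.nonsing_inv_mul _ hLt, hHH, hA1, hA2,
    Matrix.fromCols_fromRows_eq_fromBlocks, Matrix.fromBlocks_neg,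
    Matrix.fromBlocks_add, neg_zero, hC, hA3, add_neg_cancel, sub_eq_add_neg]
end

section
/- Let L be an invertible lower triangular n×n matrix and b an n-vector. Then the support of x = L⁻¹ b is contained in the closure of the support of b with respect to the directed graph G(L), i.e., the set of vertices from which there is a directed path in G(L) to a vertex in supp(b). -/
open scoped Matrix

/-- The directed graph of a matrix: edge from i to j when i ≠ j and M i j ≠ 0. -/
def matEdge {n : ℕ} (M : Matrix (Fin n) (Fin n) ℝ) (i j : Fin n) : Prop :=
  i ≠ j ∧ M i j ≠ 0

/-- The closure of a vertex set V with respect to M: the vertices from which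
there is a directed path in G(M) to a vertex of V. -/
def matClosure {n : ℕ} (M : Matrix (Fin n) (Fin n) ℝ) (V : Set (Fin n)) : Set (Fin n) :=
  {i | ∃ j ∈ V, Relation.ReflTransGen (matEdge M) i j}

/-- For an invertible lower triangular L, the support of
x = L⁻¹ b is contained in the closure of the support of b with respect to
G(L). -/
theorem stmt_14 {n : ℕ} (L : Matrix (Fin n) (Fin n) ℝ)
    (hLtri : ∀ i j : Fin n, i < j → L i j = 0) (hL : IsUnit L.det)
    (b : Fin n → ℝ) :
    {i | (L⁻¹ *ᵥ b) i ≠ 0} ⊆ matClosure L {j | b j ≠ 0} := by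

  set x := L⁻¹ *ᵥ b with hx
  have hLx : L *ᵥ x = b := by
    rw [hx, Matrix.mulVec_mulVec, Matrix.mul_nonsing_inv L hL, Matrix.one_mulVec]
  have hdiag : ∀ i, L i i ≠ 0 := by
    intro i h0
    apply hL.ne_zero
    rw [Matrix.det_of_lowerTriangular L hLtri]
    exact Finset.prod_eq_zero (Finset.mem_univ i) h0
  have key : ∀ m : ℕ, ∀ i : Fin n, i.val = m → x i ≠ 0 → i ∈ matClosure L {j | b j ≠ 0} := by
    intro m
    induction m using Nat.strong_induction_on with
    | _ m IHm =>
    intro i him hi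
    by_cases hbi : b i ≠ 0
    · exact ⟨i, hbi, Relation.ReflTransGen.refl⟩
    push_neg at hbi
    by_contra hcon
    have hzero : ∀ j ∈ Finset.univ, j ≠ i → L i j * x j = 0 := by
      intro j _ hj
      by_contra h0
      have hLij : L i j ≠ 0 := fun h => h0 (by simp [h])
      have hxj : x j ≠ 0 := fun h => h0 (by simp [h])
      have hji : j < i := by
        rcases lt_or_gt_of_ne hj with h | h
        · exact h
        · exact absurd (hLtri i j h) hLij
      obtain ⟨k, hk, hpath⟩ := IHm j.val (him ▸ hji) j rfl hxj
      exact hcon ⟨k, hk, Relation.ReflTransGen.head ⟨Ne.symm hj, hLij⟩ hpath⟩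
    have hsum : ∑ j, L i j * x j = b i := by
      have := congrFun hLx i
      simpa [Matrix.mulVec, dotProduct] using this
    rw [Finset.sum_eq_single i hzero (by simp)] at hsum
    rw [hbi] at hsum
    exact (mul_ne_zero (hdiag i) hi) hsum
  intro i hi
  exact key i.val i rfl hi
end

section
/- Let A be a nonsingular n×n matrix, b an n-vector, and x = A⁻¹ b. For any index set T ⊆ {1,...,n}, the components x_i for i ∈ T are determined by the entries of A and the components b_j for j in the closure of T with respect to Aᵀ; i.e., if b and b' agree on closure_{Aᵀ}(T), and the closure is closed with respect to Aᵀ, then (A⁻¹b)_i = (A⁻¹b')_i for all i ∈ T. -/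
open scoped Matrix

/-- For nonsingular A, the components of x = A⁻¹ b on an index
set T are determined by the components of b on the closure of T with respect
to Aᵀ: if b and b' agree on closure_{Aᵀ}(T) (which is closed w.r.t. Aᵀ), then
(A⁻¹ b)ᵢ = (A⁻¹ b')ᵢ for all i ∈ T. -/
theorem stmt_15 {n : ℕ} (A : Matrix (Fin n) (Fin n) ℝ) (hA : IsUnit A.det)
    (T : Set (Fin n)) (b b' : Fin n → ℝ)
    (hclosed : ∀ i j : Fin n, j ∈ matClosure Aᵀ T → matEdge Aᵀ i j →
      i ∈ matClosure Aᵀ T)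
    (hagree : ∀ j ∈ matClosure Aᵀ T, b j = b' j) :
    ∀ i ∈ T, (A⁻¹ *ᵥ b) i = (A⁻¹ *ᵥ b') i := by
  classical
  set S : Set (Fin n) := matClosure Aᵀ T with hS
  set p : Fin n → Prop := fun i => i ∈ S with hp
  -- zero block: rows in S, columns outside S
  have hz : ∀ j, p j → ∀ i, ¬ p i → A j i = 0 := by
    intro j hj i hi
    by_contra hne
    apply hi
    have hij : i ≠ j := by rintro rfl; exact hi hj
    exact hclosed i j hj ⟨hij, hne⟩
  -- determinant factorization
  have hdet : A.det = (A.toSquareBlockProp p).det *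
      (A.toSquareBlockProp fun i => ¬ p i).det :=
    Matrix.twoBlockTriangular_det' A p hz
  have hdS : (A.toSquareBlockProp p).det ≠ 0 := by
    intro h0
    rw [hdet, h0, zero_mul] at hA
    simp at hA
  set x : Fin n → ℝ := A⁻¹ *ᵥ (b - b') with hx
  have hAx : A *ᵥ x = b - b' := by
    rw [hx, Matrix.mulVec_mulVec, Matrix.mul_nonsing_inv A hA, Matrix.one_mulVec]
  -- on S, A *ᵥ x = 0
  have hAx0 : ∀ j, p j → (A *ᵥ x) j = 0 := by
    intro j hj
    rw [hAx]
    simp [hagree j hj]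
  set y : {a // p a} → ℝ := fun i => x i with hy
  have hmv : (A.toSquareBlockProp p) *ᵥ y = 0 := by
    funext j
    have : (A *ᵥ x) j = ∑ i : {a // p a}, A j i * x i := by
      rw [Matrix.mulVec, dotProduct,
        ← Finset.sum_filter_add_sum_filter_not Finset.univ p (fun i => A j i * x i)]
      have h2 : ∑ i ∈ Finset.univ.filter (fun i => ¬ p i), A j i * x i = 0 := by
        apply Finset.sum_eq_zero
        intro i hi
        simp only [Finset.mem_filter, Finset.mem_univ, true_and] at hi
        rw [hz j j.2 i hi, zero_mul]
      rw [h2, add_zero,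
        Finset.sum_subtype (p := p) (Finset.univ.filter p) (by simp) (fun i => A j i * x i)]
    have h0 := hAx0 j j.2
    rw [this] at h0
    simpa [Matrix.mulVec, dotProduct, Matrix.toSquareBlockProp, y] using h0
  have hy0 : y = 0 := Matrix.eq_zero_of_mulVec_eq_zero hdS hmv
  have hx0 : ∀ i, p i → x i = 0 := by
    intro i hi
    have := congrFun hy0 ⟨i, hi⟩
    simpa [hy] using this
  intro i hiT
  have hiS : p i := ⟨i, hiT, Relation.ReflTransGen.refl⟩
  have : (A⁻¹ *ᵥ b) i - (A⁻¹ *ᵥ b') i = x i := by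
    rw [hx, Matrix.mulVec_sub]; rfl
  have := hx0 i hiS
  linarith [hx0 i hiS, (by rw [hx, Matrix.mulVec_sub]; rfl :
    (A⁻¹ *ᵥ b) i - (A⁻¹ *ᵥ b') i = x i)]
end

section
/- Consider the augmented system [[A₁₁, A₁₂, J₁, I],[A₁₂ᵀ, A₂₂, J₂, 0],[J₁ᵀ, J₂ᵀ, C, 0],[I, 0, 0, 0]] [x̂₁₁; x̂₁₂; x̂₂; x̂₃] = [b₁; b₂; Hᵀb̂; 0]. Any solution satisfies x̂₁₁ = 0, and the pair (x̂₁₂, x̂₂) solves the system [[C, J₂ᵀ],[J₂, A₂₂]] [x̂₂; x̂₁₂] = [Hᵀb̂; b₂], independently of the choice of J₁; moreover x̂₃ = b₁ - A₁₂ x̂₁₂ - J₁ x̂₂ is uniquely determined given (x̂₁₂, x̂₂). -/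
open scoped Matrix

/-- Lemma 2.1: Any solution of the augmented system
[[A₁₁, A₁₂, J₁, I],[A₁₂ᵀ, A₂₂, J₂, 0],[J₁ᵀ, J₂ᵀ, C, 0],[I, 0, 0, 0]]
[x̂₁₁; x̂₁₂; x̂₂; x̂₃] = [b₁; b₂; Hᵀb̂; 0] satisfies x̂₁₁ = 0, the pair
(x̂₁₂, x̂₂) solves [[C, J₂ᵀ],[J₂, A₂₂]] [x̂₂; x̂₁₂] = [Hᵀb̂; b₂] (a system not
involving J₁), and x̂₃ = b₁ - A₁₂ x̂₁₂ - J₁ x̂₂. -/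
theorem stmt_18 {m p : ℕ} (A₁₁ : Matrix (Fin m) (Fin m) ℝ)
    (A₁₂ : Matrix (Fin m) (Fin p) ℝ) (A₂₂ : Matrix (Fin p) (Fin p) ℝ)
    (C : Matrix (Fin m) (Fin m) ℝ) (hCsym : C.IsSymm)
    (J₁ : Matrix (Fin m) (Fin m) ℝ) (J₂ : Matrix (Fin p) (Fin m) ℝ)
    (hinv : IsUnit (Matrix.fromBlocks C J₂ᵀ J₂ A₂₂).det)
    (b₁ : Fin m → ℝ) (b₂ : Fin p → ℝ) (hb : Fin m → ℝ)
    (x₁₁ : Fin m → ℝ) (x₁₂ : Fin p → ℝ) (x₂ x₃ : Fin m → ℝ)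
    (hsol : (Matrix.fromBlocks (Matrix.fromBlocks A₁₁ A₁₂ A₁₂ᵀ A₂₂)
        (Matrix.fromBlocks J₁ (1 : Matrix (Fin m) (Fin m) ℝ) J₂ (0 : Matrix (Fin p) (Fin m) ℝ))
        (Matrix.fromBlocks J₁ᵀ J₂ᵀ (1 : Matrix (Fin m) (Fin m) ℝ) (0 : Matrix (Fin m) (Fin p) ℝ))
        (Matrix.fromBlocks C 0 0 0)) *ᵥ
        Sum.elim (Sum.elim x₁₁ x₁₂) (Sum.elim x₂ x₃) =
        Sum.elim (Sum.elim b₁ b₂) (Sum.elim hb 0)) :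
    x₁₁ = 0 ∧
      (Matrix.fromBlocks C J₂ᵀ J₂ A₂₂) *ᵥ Sum.elim x₂ x₁₂ = Sum.elim hb b₂ ∧
      x₃ = b₁ - A₁₂ *ᵥ x₁₂ - J₁ *ᵥ x₂ := by
  have h4 : ∀ i, x₁₁ i = 0 := by
    intro i
    have := congrFun hsol (Sum.inr (Sum.inr i))
    simpa [Matrix.fromBlocks_mulVec] using this
  have hx11 : x₁₁ = 0 := funext h4
  subst hx11
  refine ⟨rfl, ?_, ?_⟩
  · funext i
    cases i with
    | inl i =>
      have := congrFun hsol (Sum.inr (Sum.inl i))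
      simp [Matrix.fromBlocks_mulVec] at this ⊢
      linarith
    | inr i =>
      have := congrFun hsol (Sum.inl (Sum.inr i))
      simp [Matrix.fromBlocks_mulVec] at this ⊢
      linarith
  · funext i
    have := congrFun hsol (Sum.inl (Sum.inl i))
    simp [Matrix.fromBlocks_mulVec] at this ⊢
    linarith
end
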